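/- Let F be a field. Let M₀ be an a×c matrix over F, let N be a c×s matrix over F whose column span equals the kernel of M₀ (viewed as the kernel of the linear map v ↦ M₀v on F^c), let A be a b×t matrix and B a b×c matrix over F, and let L be a (t+s)×u matrix whose column span equals the kernel of the b×(t+s) matrix [A | B·N]. Then the column span of the (t+c)×u matrix [[I_t, 0],[0, N]]·L equals the kernel of the (a+b)×(t+c) block matrix [[0, M₀],[A, B]]. -/

import Mathlib

open Matrix

/-- Kernel-update step for the degree-by-degree construction of null spaces of
Macaulay matrices: if the columns of `N` span the kernel of `M₀`, and the
columns of `L` span the kernel of `[A | B·N]`, then the columns of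
`[[I, 0], [0, N]] · L` span the kernel of the block matrix `[[0, M₀], [A, B]]`. -/
theorem stmt_0 (F : Type*) [Field F] (a b c s t u : ℕ)
    (M₀ : Matrix (Fin a) (Fin c) F) (N : Matrix (Fin c) (Fin s) F)
    (A : Matrix (Fin b) (Fin t) F) (B : Matrix (Fin b) (Fin c) F)
    (L : Matrix (Fin t ⊕ Fin s) (Fin u) F)
    (hN : LinearMap.range N.mulVecLin = LinearMap.ker M₀.mulVecLin)
    (hL : LinearMap.range L.mulVecLin
      = LinearMap.ker (Matrix.fromCols A (B * N)).mulVecLin) :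
    LinearMap.range ((Matrix.fromBlocks (1 : Matrix (Fin t) (Fin t) F) 0 0 N * L).mulVecLin)
      = LinearMap.ker (Matrix.fromBlocks (0 : Matrix (Fin a) (Fin t) F) M₀ A B).mulVecLin := by
  ext z
  simp only [LinearMap.mem_range, LinearMap.mem_ker, mulVecLin_apply, ← mulVec_mulVec]
  constructor
  · rintro ⟨w, rfl⟩
    set v := L *ᵥ w with hv
    have hvker : fromCols A (B * N) *ᵥ v = 0 := by
      have : v ∈ LinearMap.range L.mulVecLin := ⟨w, rfl⟩
      rw [hL] at this
      simpa using this
    have hNv : M₀ *ᵥ (N *ᵥ (v ∘ Sum.inr)) = 0 := by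
      have : N *ᵥ (v ∘ Sum.inr) ∈ LinearMap.range N.mulVecLin := ⟨v ∘ Sum.inr, rfl⟩
      rw [hN] at this
      simpa using this
    have hvelim : v = Sum.elim (v ∘ Sum.inl) (v ∘ Sum.inr) := by
      funext i; cases i <;> rfl
    rw [hvelim, fromCols_mulVec_sumElim, ← mulVec_mulVec] at hvker
    rw [fromBlocks_mulVec, fromBlocks_mulVec]
    simp only [Sum.elim_inl, Sum.elim_inr, Function.comp_def, one_mulVec, zero_mulVec,
      add_zero, zero_add]
    funext i
    cases i with
    | inl i => simpa [Function.comp_def] using congrFun hNv i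
    | inr i => simpa [Function.comp_def] using congrFun hvker i
  · intro hz
    rw [fromBlocks_mulVec] at hz
    have hz1 : M₀ *ᵥ (z ∘ Sum.inr) = 0 := by
      funext i
      have := congrFun hz (Sum.inl i)
      simpa using this
    have hz2 : A *ᵥ (z ∘ Sum.inl) + B *ᵥ (z ∘ Sum.inr) = 0 := by
      funext i
      have := congrFun hz (Sum.inr i)
      simpa using this
    have : z ∘ Sum.inr ∈ LinearMap.range N.mulVecLin := by
      rw [hN]; simpa using hz1
    obtain ⟨y, hy⟩ := this
    simp only [mulVecLin_apply] at hy
    have : Sum.elim (z ∘ Sum.inl) y ∈ LinearMap.range L.mulVecLin := by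
      rw [hL]
      simp only [LinearMap.mem_ker, mulVecLin_apply, fromCols_mulVec_sumElim]
      rw [← mulVec_mulVec, hy]
      simpa using hz2
    obtain ⟨w, hw⟩ := this
    simp only [mulVecLin_apply] at hw
    refine ⟨w, ?_⟩
    rw [hw, fromBlocks_mulVec]
    funext i
    cases i with
    | inl i => simp
    | inr i => simpa using congrFun hy i
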